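/- arXiv:2305.10022 — 4 statements merged into one kernel-verified Lean document; each statement's English description precedes it below -/
import Mathlib

section
/- Let (L,v) be a valued field with value group vL (written additively), let Σ be a nonempty final segment of vL^{>0}, let I_Σ := {a ∈ L : a ≠ 0 and v(a) ∈ Σ} ∪ {0} (an ideal of the valuation ring O_L), and let m ∈ ℕ with m ≥ 2. Then the following are equivalent: (a) I_Σ = I_Σ^m; (b) I_Σ = I_Σ^n for all n ∈ ℕ with n ≥ 2; (c) for every n ∈ ℕ with n ≥ 1, Σ = {γ ∈ vL^{>0} : there is s ∈ Σ with n·s ≤ γ}. -/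
open Polynomial

/-- The valuation ring of an additive valuation on a field. -/
def AddValuation.intsSubring {L : Type} [Field L] {Γ : Type} [AddCommGroup Γ] [LinearOrder Γ] [IsOrderedAddMonoid Γ]
    (v : AddValuation L (WithTop Γ)) : Subring L where
  carrier := {x | 0 ≤ v x}
  zero_mem' := by rw [Set.mem_setOf_eq, v.map_zero]; exact le_top
  one_mem' := by rw [Set.mem_setOf_eq, v.map_one]
  add_mem' := fun {x y} hx hy => le_trans (le_min hx hy) (v.map_add x y)
  mul_mem' := fun {x y} hx hy => by
    rw [Set.mem_setOf_eq, v.map_mul]; exact add_nonneg hx hy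
  neg_mem' := fun {x} hx => by rw [Set.mem_setOf_eq, v.map_neg]; exact hx

/-- The valuation ring of the restriction of `v` to `K`. -/
def ringOfInts (K : Type) [Field K] {L Γ : Type} [Field L] [Algebra K L]
    [AddCommGroup Γ] [LinearOrder Γ] [IsOrderedAddMonoid Γ] (v : AddValuation L (WithTop Γ)) : Subring K :=
  (v.intsSubring).comap (algebraMap K L)

noncomputable instance {K L Γ : Type} [Field K] [Field L] [Algebra K L]
    [AddCommGroup Γ] [LinearOrder Γ] [IsOrderedAddMonoid Γ] (v : AddValuation L (WithTop Γ)) :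
    Algebra (ringOfInts K v) v.intsSubring :=
  ((algebraMap K L).restrict (ringOfInts K v) v.intsSubring (fun _ hx => hx)).toAlgebra

noncomputable instance {K L Γ : Type} [Field K] [Field L] [Algebra K L]
    [AddCommGroup Γ] [LinearOrder Γ] [IsOrderedAddMonoid Γ] (v : AddValuation L (WithTop Γ)) :
    Algebra (ringOfInts K v) L :=
  ((algebraMap K L).comp (ringOfInts K v).subtype).toAlgebra

namespace Stmt2Aux

variable {L Γ : Type} [Field L] [AddCommGroup Γ] [LinearOrder Γ] [IsOrderedAddMonoid Γ]

theorem vne_top (v : AddValuation L (WithTop Γ)) {x : L} (hx : x ≠ 0) : v x ≠ ⊤ := by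
  intro h
  have h1 : v (x * x⁻¹) = v x + v x⁻¹ := v.map_mul _ _
  rw [mul_inv_cancel₀ hx, v.map_one, h, top_add] at h1
  exact WithTop.zero_ne_top h1

theorem coe_nsmul (s : Γ) (n : ℕ) : ((n • s : Γ) : WithTop Γ) = n • (s : WithTop Γ) := by
  induction n with
  | zero => simp
  | succ k ih => rw [succ_nsmul, succ_nsmul, WithTop.coe_add, ih]

/-- The ideal `{x ∈ O_L : x = 0 ∨ ∃ s ∈ S, n•s ≤ v x}`. -/
def myJ (v : AddValuation L (WithTop Γ)) (S : Set Γ) (n : ℕ) : Ideal v.intsSubring where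
  carrier := {x | (x : L) = 0 ∨ ∃ s ∈ S, ((n • s : Γ) : WithTop Γ) ≤ v (x : L)}
  zero_mem' := Or.inl rfl
  add_mem' := by
    rintro x y hx hy
    rcases hx with h0 | ⟨s1, hs1, hv1⟩
    · rcases hy with h0' | ⟨s2, hs2, hv2⟩
      · exact Or.inl (by push_cast; rw [h0, h0', add_zero])
      · exact Or.inr ⟨s2, hs2, by push_cast; rw [h0, zero_add]; exact hv2⟩
    rcases hy with h0' | ⟨s2, hs2, hv2⟩
    · exact Or.inr ⟨s1, hs1, by push_cast; rw [h0', add_zero]; exact hv1⟩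
    refine Or.inr ⟨min s1 s2, ?_, ?_⟩
    · rcases min_cases s1 s2 with ⟨h, _⟩ | ⟨h, _⟩ <;> rw [h] <;> assumption
    · have hmin : ((n • min s1 s2 : Γ) : WithTop Γ) ≤ min (v (x : L)) (v (y : L)) := by
        refine le_min (le_trans ?_ hv1) (le_trans ?_ hv2)
        · exact WithTop.coe_le_coe.mpr (nsmul_le_nsmul_right (min_le_left _ _) n)
        · exact WithTop.coe_le_coe.mpr (nsmul_le_nsmul_right (min_le_right _ _) n)
      refine le_trans hmin (le_trans (v.map_add _ _) (le_of_eq ?_))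
      push_cast; rfl
  smul_mem' := by
    rintro c x hx
    rcases hx with h0 | ⟨s, hs, hv⟩
    · exact Or.inl (by rw [smul_eq_mul]; push_cast [h0]; exact mul_zero _)
    refine Or.inr ⟨s, hs, ?_⟩
    have : v ((c • x : v.intsSubring) : L) = v (c : L) + v (x : L) := by
      rw [smul_eq_mul]; push_cast; exact v.map_mul _ _
    rw [this]
    calc ((n • s : Γ) : WithTop Γ) = 0 + ((n • s : Γ) : WithTop Γ) := (zero_add _).symm
      _ ≤ v (c : L) + v (x : L) := add_le_add c.2 hv

theorem mem_myJ (v : AddValuation L (WithTop Γ)) (S : Set Γ) (n : ℕ) (x : v.intsSubring) :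
    x ∈ myJ v S n ↔ ((x : L) = 0 ∨ ∃ s ∈ S, ((n • s : Γ) : WithTop Γ) ≤ v (x : L)) :=
  Iff.rfl

theorem span_pow_eq (v : AddValuation L (WithTop Γ)) (S : Set Γ)
    (hsub : ∀ γ ∈ S, 0 < γ ∧ ∃ x : L, x ≠ 0 ∧ v x = (γ : WithTop Γ)) :
    ∀ n : ℕ, 1 ≤ n →
      (Ideal.span {x : v.intsSubring | ∃ γ ∈ S, v (x : L) = (γ : WithTop Γ)}) ^ n = myJ v S n := by
  have hle1 : Ideal.span {x : v.intsSubring | ∃ γ ∈ S, v (x : L) = (γ : WithTop Γ)} ≤ myJ v S 1 := by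
    rw [Ideal.span_le]
    rintro x ⟨γ, hγ, hvx⟩
    exact Or.inr ⟨γ, hγ, by rw [one_smul]; exact le_of_eq hvx.symm⟩
  have hmul : ∀ a b : ℕ, myJ v S a * myJ v S b ≤ myJ v S (a + b) := by
    intro a b
    rw [Ideal.mul_le]
    intro r hr t ht
    rw [mem_myJ] at hr ht ⊢
    rcases hr with h0 | ⟨s1, hs1, hv1⟩
    · exact Or.inl (by push_cast; rw [h0, zero_mul])
    rcases ht with h0 | ⟨s2, hs2, hv2⟩
    · exact Or.inl (by push_cast; rw [h0, mul_zero])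
    refine Or.inr ⟨min s1 s2, ?_, ?_⟩
    · rcases min_cases s1 s2 with ⟨h, _⟩ | ⟨h, _⟩ <;> rw [h] <;> assumption
    · have h1 : ((a + b) • min s1 s2 : Γ) ≤ a • s1 + b • s2 := by
        rw [add_smul]
        exact add_le_add (nsmul_le_nsmul_right (min_le_left _ _) a)
          (nsmul_le_nsmul_right (min_le_right _ _) b)
      calc (((a + b) • min s1 s2 : Γ) : WithTop Γ)
          ≤ ((a • s1 + b • s2 : Γ) : WithTop Γ) := WithTop.coe_le_coe.mpr h1
        _ = ((a • s1 : Γ) : WithTop Γ) + ((b • s2 : Γ) : WithTop Γ) := WithTop.coe_add _ _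
        _ ≤ v (r : L) + v (t : L) := add_le_add hv1 hv2
        _ = v ((r * t : v.intsSubring) : L) := by push_cast; rw [v.map_mul]
  have hle : ∀ n : ℕ, 1 ≤ n →
      (Ideal.span {x : v.intsSubring | ∃ γ ∈ S, v (x : L) = (γ : WithTop Γ)}) ^ n ≤ myJ v S n := by
    intro n hn
    induction n, hn using Nat.le_induction with
    | base => rw [pow_one]; exact hle1
    | succ k hk ih =>
      rw [pow_succ]
      exact le_trans (Ideal.mul_mono ih hle1) (hmul k 1)
  intro n hn
  refine le_antisymm (hle n hn) ?_
  intro x hx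
  rw [mem_myJ] at hx
  by_cases hx0 : (x : L) = 0
  · rw [ZeroMemClass.coe_eq_zero.mp hx0]; exact zero_mem _
  rcases hx with h0 | ⟨s, hs, hvx⟩
  · exact absurd h0 hx0
  obtain ⟨hs0, y, hy0, hvy⟩ := hsub s hs
  have hyO : y ∈ v.intsSubring := by
    show 0 ≤ v y; rw [hvy]; exact_mod_cast hs0.le
  set Y : v.intsSubring := ⟨y, hyO⟩ with hY
  have hYG : Y ∈ Ideal.span {x : v.intsSubring | ∃ γ ∈ S, v (x : L) = (γ : WithTop Γ)} :=
    Ideal.subset_span ⟨s, hs, hvy⟩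
  have hYn : Y ^ n ∈ (Ideal.span {x : v.intsSubring | ∃ γ ∈ S, v (x : L) = (γ : WithTop Γ)}) ^ n :=
    Ideal.pow_mem_pow hYG n
  have hyn0 : y ^ n ≠ 0 := pow_ne_zero n hy0
  set z : L := (x : L) / y ^ n with hz
  have hzx : z * y ^ n = (x : L) := div_mul_cancel₀ _ hyn0
  have hz0 : z ≠ 0 := by intro h; rw [h, zero_mul] at hzx; exact hx0 hzx.symm
  obtain ⟨γ, hγ⟩ := WithTop.ne_top_iff_exists.mp (vne_top v hx0)
  obtain ⟨δ, hδ⟩ := WithTop.ne_top_iff_exists.mp (vne_top v hz0)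
  have hvyn : v (y ^ n) = ((n • s : Γ) : WithTop Γ) := by
    rw [v.map_pow, hvy, coe_nsmul]
  have hsum : v z + v (y ^ n) = v (x : L) := by rw [← v.map_mul, hzx]
  have heq : δ + n • s = γ := by
    rw [← hδ, ← hγ, hvyn] at hsum
    exact_mod_cast hsum
  have hγge : n • s ≤ γ := by
    rw [← hγ] at hvx; exact_mod_cast hvx
  have hδ0 : 0 ≤ δ := by
    have h2 : 0 + n • s ≤ δ + n • s := by rw [zero_add, heq]; exact hγge
    exact le_of_add_le_add_right h2
  have hzO : z ∈ v.intsSubring := by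
    show 0 ≤ v z; rw [← hδ]; exact_mod_cast hδ0
  have hxeq : x = (⟨z, hzO⟩ : v.intsSubring) * Y ^ n := by
    apply Subtype.ext; push_cast; exact hzx.symm
  rw [hxeq]
  exact Ideal.mul_mem_left _ _ hYn

theorem J_eq_to_S (v : AddValuation L (WithTop Γ)) (S : Set Γ)
    (hsub : ∀ γ ∈ S, 0 < γ ∧ ∃ x : L, x ≠ 0 ∧ v x = (γ : WithTop Γ))
    (hfinal : ∀ s ∈ S, ∀ t : Γ, 0 < t → (∃ x : L, x ≠ 0 ∧ v x = (t : WithTop Γ)) →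
      s ≤ t → t ∈ S)
    {n : ℕ} (hn : 1 ≤ n) (h : myJ v S 1 = myJ v S n) :
    S = {γ : Γ | (0 < γ ∧ ∃ x : L, x ≠ 0 ∧ v x = (γ : WithTop Γ)) ∧ ∃ s ∈ S, n • s ≤ γ} := by
  ext γ
  constructor
  · intro hγ
    obtain ⟨hpos, x, hx0, hvx⟩ := hsub γ hγ
    refine ⟨⟨hpos, x, hx0, hvx⟩, ?_⟩
    have hxO : x ∈ v.intsSubring := by
      show 0 ≤ v x; rw [hvx]; exact_mod_cast hpos.le
    have hx1 : (⟨x, hxO⟩ : v.intsSubring) ∈ myJ v S 1 :=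
      Or.inr ⟨γ, hγ, by rw [one_smul]; exact le_of_eq hvx.symm⟩
    rw [h, mem_myJ] at hx1
    rcases hx1 with h0 | ⟨s, hs, hvs⟩
    · exact absurd h0 hx0
    · refine ⟨s, hs, ?_⟩
      rw [hvx] at hvs
      exact_mod_cast hvs
  · rintro ⟨⟨hpos, hach⟩, s, hs, hns⟩
    obtain ⟨hs0, _⟩ := hsub s hs
    have hsγ : s ≤ γ :=
      le_trans (le_trans (le_of_eq (one_smul ℕ s).symm) (nsmul_le_nsmul_left hs0.le hn)) hns
    exact hfinal s hs γ hpos hach hsγ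

theorem S_eq_to_J (v : AddValuation L (WithTop Γ)) (S : Set Γ)
    (hsub : ∀ γ ∈ S, 0 < γ ∧ ∃ x : L, x ≠ 0 ∧ v x = (γ : WithTop Γ))
    (hfinal : ∀ s ∈ S, ∀ t : Γ, 0 < t → (∃ x : L, x ≠ 0 ∧ v x = (t : WithTop Γ)) →
      s ≤ t → t ∈ S)
    {n : ℕ} (hn : 1 ≤ n)
    (h : S = {γ : Γ | (0 < γ ∧ ∃ x : L, x ≠ 0 ∧ v x = (γ : WithTop Γ)) ∧ ∃ s ∈ S, n • s ≤ γ}) :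
    myJ v S 1 = myJ v S n := by
  apply le_antisymm
  · intro x hx
    rw [mem_myJ] at hx ⊢
    rcases hx with h0 | ⟨s, hs, hvs⟩
    · exact Or.inl h0
    by_cases hx0 : (x : L) = 0
    · exact Or.inl hx0
    obtain ⟨γ, hγ⟩ := WithTop.ne_top_iff_exists.mp (vne_top v hx0)
    have hsγ : s ≤ γ := by
      rw [one_smul] at hvs; rw [← hγ] at hvs; exact_mod_cast hvs
    obtain ⟨hs0, _⟩ := hsub s hs
    have hγS : γ ∈ S := hfinal s hs γ (lt_of_lt_of_le hs0 hsγ) ⟨x, hx0, hγ.symm⟩ hsγ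
    rw [h] at hγS
    obtain ⟨_, s', hs', hns'⟩ := hγS
    refine Or.inr ⟨s', hs', ?_⟩
    rw [← hγ]
    exact_mod_cast hns'
  · intro x hx
    rw [mem_myJ] at hx ⊢
    rcases hx with h0 | ⟨s, hs, hvs⟩
    · exact Or.inl h0
    obtain ⟨hs0, _⟩ := hsub s hs
    refine Or.inr ⟨s, hs, le_trans ?_ hvs⟩
    rw [one_smul]
    exact WithTop.coe_le_coe.mpr
      (le_trans (le_of_eq (one_smul ℕ s).symm) (nsmul_le_nsmul_left hs0.le hn))

end Stmt2Aux

/-- **Lemma (idempotent ideals).** Let `(L,v)` be a valued field, `S` a nonempty final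
segment of `vL^{>0}`, `I_S` the corresponding ideal of `O_L`, and `m ≥ 2`.  TFAE:
(a) `I_S = I_S^m`; (b) `I_S = I_S^n` for all `n ≥ 2`;
(c) for all `n ≥ 1`, `S = {γ ∈ vL^{>0} | ∃ s ∈ S, n•s ≤ γ}`. -/


theorem stmt2 {L Γ : Type} [Field L] [AddCommGroup Γ] [LinearOrder Γ] [IsOrderedAddMonoid Γ]
    (v : AddValuation L (WithTop Γ)) (S : Set Γ)
    (hsub : ∀ γ ∈ S, 0 < γ ∧ ∃ x : L, x ≠ 0 ∧ v x = (γ : WithTop Γ))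
    (hne : S.Nonempty)
    (hfinal : ∀ s ∈ S, ∀ t : Γ, 0 < t → (∃ x : L, x ≠ 0 ∧ v x = (t : WithTop Γ)) →
      s ≤ t → t ∈ S)
    (m : ℕ) (hm : 2 ≤ m) :
    List.TFAE
      [ Ideal.span {x : v.intsSubring | ∃ γ ∈ S, v (x : L) = (γ : WithTop Γ)} =
          (Ideal.span {x : v.intsSubring | ∃ γ ∈ S, v (x : L) = (γ : WithTop Γ)}) ^ m,
        (∀ n : ℕ, 2 ≤ n →
          Ideal.span {x : v.intsSubring | ∃ γ ∈ S, v (x : L) = (γ : WithTop Γ)} =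
            (Ideal.span {x : v.intsSubring | ∃ γ ∈ S, v (x : L) = (γ : WithTop Γ)}) ^ n),
        (∀ n : ℕ, 1 ≤ n →
          S = {γ : Γ | (0 < γ ∧ ∃ x : L, x ≠ 0 ∧ v x = (γ : WithTop Γ)) ∧
                ∃ s ∈ S, n • s ≤ γ}) ] := by
  set G := {x : v.intsSubring | ∃ γ ∈ S, v (x : L) = (γ : WithTop Γ)} with hG
  have key : ∀ n : ℕ, 1 ≤ n → (Ideal.span G) ^ n = Stmt2Aux.myJ v S n :=
    Stmt2Aux.span_pow_eq v S hsub
  have hI1 : Ideal.span G = Stmt2Aux.myJ v S 1 := by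
    rw [← pow_one (Ideal.span G)]; exact key 1 le_rfl
  tfae_have 1 → 3
  | h1 => by
    intro n hn
    have hpow : ∀ k : ℕ, Ideal.span G = (Ideal.span G) ^ (m ^ k) := by
      intro k
      induction k with
      | zero => simp
      | succ j ih => rw [pow_succ, pow_mul, ← ih, ← h1]
    have hlt : n ≤ m ^ n :=
      le_of_lt (Nat.lt_pow_self (n := n) (lt_of_lt_of_le one_lt_two hm))
    have heqn : Ideal.span G = (Ideal.span G) ^ n :=
      le_antisymm (le_trans (le_of_eq (hpow n)) (Ideal.pow_le_pow_right hlt))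
        (le_trans (Ideal.pow_le_pow_right hn) (le_of_eq (pow_one _)))
    have hJ : Stmt2Aux.myJ v S 1 = Stmt2Aux.myJ v S n := by
      rw [← hI1, ← key n hn]; exact heqn
    exact Stmt2Aux.J_eq_to_S v S hsub hfinal hn hJ
  tfae_have 3 → 2
  | h3 => by
    intro n hn
    have hn1 : 1 ≤ n := le_trans one_le_two hn
    have hJ := Stmt2Aux.S_eq_to_J v S hsub hfinal hn1 (h3 n hn1)
    rw [key n hn1, hI1]; exact hJ
  tfae_have 2 → 1
  | h2 => h2 m hm
  tfae_finish
end

section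
/- Let (K(x)|K,v) be an immediate extension of valued fields which is pure in x. For c ∈ K choose t_c ∈ K with v(t_c) = −v(x−c) (possible since the extension is immediate) and set x_c := t_c·(x−c) ∈ O_{K(x)}. Then: (i) for every polynomial g ∈ K[X] with g(x) ∈ O_{K(x)} there exists c ∈ K such that g(x) ∈ O_K[x_c]; (ii) if in addition x is algebraic over K, then O_{K(x)} = ⋃_{c ∈ K} O_K[x_c]. -/
open Polynomial

lemma coe_nsmul_withTop {Γ : Type} [AddMonoid Γ] (n : ℕ) (a : Γ) :
    ((n • a : Γ) : WithTop Γ) = n • (a : WithTop Γ) := by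
  induction n with
  | zero => simp
  | succ k ih => rw [succ_nsmul, succ_nsmul, WithTop.coe_add, ih]

lemma taylor_expand_aeval {K L : Type} [Field K] [Field L] [Algebra K L]
    (g : Polynomial K) (c : K) (x : L) :
    Polynomial.aeval x g = ∑ i ∈ Finset.range (g.natDegree + 1),
      algebraMap K L ((Polynomial.hasseDeriv i g).eval c) * (x - algebraMap K L c) ^ i := by
  have h1 : (Polynomial.taylor c g).support ⊆ Finset.range (g.natDegree + 1) := by
    rw [← Polynomial.natDegree_taylor g c]
    exact Polynomial.supp_subset_range_natDegree_succ
  calc Polynomial.aeval x g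
      = Polynomial.aeval x ((Polynomial.taylor c g).sum fun i a =>
          Polynomial.C a * (Polynomial.X - Polynomial.C c) ^ i) := by
        rw [Polynomial.sum_taylor_eq]
    _ = ∑ i ∈ (Polynomial.taylor c g).support,
          algebraMap K L ((Polynomial.taylor c g).coeff i) * (x - algebraMap K L c) ^ i := by
        rw [Polynomial.sum, map_sum]
        exact Finset.sum_congr rfl fun i _ => by
          simp [map_mul, map_pow, map_sub, Polynomial.aeval_C, Polynomial.aeval_X]
    _ = ∑ i ∈ Finset.range (g.natDegree + 1),
          algebraMap K L ((Polynomial.taylor c g).coeff i) * (x - algebraMap K L c) ^ i :=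
        Finset.sum_subset h1 (fun i _ hi => by
          rw [Polynomial.notMem_support_iff.mp hi]; simp)
    _ = _ := Finset.sum_congr rfl fun i _ => by rw [Polynomial.taylor_coeff]

lemma addval_sum_eq {L Γ : Type} [Field L] [AddCommGroup Γ] [LinearOrder Γ] [IsOrderedAddMonoid Γ]
    (v : AddValuation L (WithTop Γ)) {s : Finset ℕ} {f : ℕ → L} {j : ℕ}
    (hj : j ∈ s) (h0 : v (f j) ≠ ⊤) (hf : ∀ i ∈ s, i ≠ j → v (f j) < v (f i)) :
    v (∑ i ∈ s, f i) = v (f j) := by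
  classical
  rw [Finset.sum_eq_add_sum_sdiff_singleton_of_mem hj]
  exact v.map_add_eq_of_lt_left (v.map_lt_sum h0 fun i hi =>
    hf i (Finset.mem_sdiff.mp hi).1 (by simpa using (Finset.mem_sdiff.mp hi).2))

lemma nsmul_cancel_aux {Γ : Type} [AddCommGroup Γ] [LinearOrder Γ] [IsOrderedAddMonoid Γ] {p q : ℕ} (hpq : p < q)
    {di dj u w : Γ} (hu : di + p • u = dj + q • u) (hw : di + p • w = dj + q • w) : u = w := by
  have key : ∀ z : Γ, di + p • z = dj + q • z → (q - p) • z = di - dj := by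
    intro z hz
    have hq : q • z = (q - p) • z + p • z := by
      rw [← add_nsmul, Nat.sub_add_cancel hpq.le]
    rw [hq, ← add_assoc] at hz
    have h1 : di = dj + (q - p) • z := add_right_cancel hz
    rw [h1]; abel
  have hne : q - p ≠ 0 := Nat.sub_ne_zero_of_lt hpq
  exact (nsmul_right_strictMono hne).injective ((key u hu).trans (key w hw).symm)

lemma nsmul_eq_cancel {Γ : Type} [AddCommGroup Γ] [LinearOrder Γ] [IsOrderedAddMonoid Γ]
    {i j : ℕ} (hij : i ≠ j) {di dj a b : Γ}
    (ha : di + i • a = dj + j • a) (hb : di + i • b = dj + j • b) : a = b := by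
  rcases Nat.lt_trichotomy i j with h | h | h
  · exact nsmul_cancel_aux h ha hb
  · exact absurd h hij
  · exact nsmul_cancel_aux h ha.symm hb.symm


/-- **Lemma (generation of the valuation ring).** Let `(K(x)|K,v)` be an immediate
extension which is pure in `x`.  For `c ∈ K` choose `t c ∈ K` with
`v(t c) = −v(x−c)` and set `x_c := t_c·(x−c)`.  Then:
(i) every `g(x) ∈ O_{K(x)}` with `g ∈ K[X]` lies in some `O_K[x_c]`;
(ii) if `x` is algebraic over `K`, then `O_{K(x)} = ⋃_c O_K[x_c]`. -/
theorem stmt4 {K L Γ : Type} [Field K] [Field L] [Algebra K L]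
    [AddCommGroup Γ] [LinearOrder Γ] [IsOrderedAddMonoid Γ]
    (v : AddValuation L (WithTop Γ))
    -- `L = K(x)`
    (x : L) (hgen : Algebra.adjoin K {x} = ⊤)
    -- the extension is immediate: same value group and same residue field
    (himmv : ∀ y : L, y ≠ 0 → ∃ c : K, c ≠ 0 ∧ v y = v (algebraMap K L c))
    (himmr : ∀ y : L, 0 ≤ v y → ∃ c : K, 0 < v (y - algebraMap K L c))
    -- the extension is pure in `x` (with `deg g < [K(x):K]`, no degree restriction
    -- if `x` is transcendental)
    (hpure : ∀ g : Polynomial K,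
      (IsAlgebraic K x → g.natDegree < Module.finrank K L) →
      ∃ c₀ : K, ∃ δ : WithTop Γ, ∀ c : K,
        v (x - algebraMap K L c₀) ≤ v (x - algebraMap K L c) →
        v (algebraMap K L (g.eval c)) = δ)
    -- the elements `t c`
    (t : K → K)
    (ht : ∀ c : K, v (algebraMap K L (t c)) = - v (x - algebraMap K L c)) :
    (∀ g : Polynomial K, 0 ≤ v (Polynomial.aeval x g) →
      ∃ c : K, Polynomial.aeval x g ∈
        Algebra.adjoin (ringOfInts K v)
          {algebraMap K L (t c) * (x - algebraMap K L c)}) ∧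
    (IsAlgebraic K x →
      {y : L | 0 ≤ v y} =
        ⋃ c : K, (Algebra.adjoin (ringOfInts K v)
          {algebraMap K L (t c) * (x - algebraMap K L c)} : Set L)) := by
  classical
  set φ := algebraMap K L with hφ
  have hmem_ints : ∀ a : K, 0 ≤ v (φ a) → a ∈ ringOfInts K v := by
    intro a ha
    exact Subring.mem_comap.mpr ha
  have halg_eq : ∀ (a : K) (h : a ∈ ringOfInts K v),
      algebraMap (ringOfInts K v) L ⟨a, h⟩ = φ a := fun a h => rfl
  have key : ∀ g : Polynomial K, 0 ≤ v (Polynomial.aeval x g) →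
      ∃ c : K, Polynomial.aeval x g ∈
        Algebra.adjoin (ringOfInts K v) {φ (t c) * (x - φ c)} := by
    intro g hg
    by_cases hxr : x ∈ Set.range φ
    · obtain ⟨c, hc⟩ := hxr
      refine ⟨c, ?_⟩
      have he : Polynomial.aeval x g = φ (g.eval c) := by
        rw [← hc]
        exact Polynomial.aeval_algebraMap_apply_eq_algebraMap_eval c g
      have hmem : g.eval c ∈ ringOfInts K v := hmem_ints _ (he ▸ hg)
      rw [he, ← halg_eq _ hmem]
      exact Subalgebra.algebraMap_mem _ _
    · -- main case : x ∉ K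
      have hne : ∀ c : K, x - φ c ≠ 0 := fun c h => hxr ⟨c, (sub_eq_zero.mp h).symm⟩
      have hvne : ∀ c : K, v (x - φ c) ≠ ⊤ := fun c => v.ne_top_iff.mpr (hne c)
      have hnomax : ∀ c : K, ∃ c' : K, v (x - φ c) < v (x - φ c') := by
        intro c
        obtain ⟨d, hd0, hdv⟩ := himmv (x - φ c) (hne c)
        have hφd : φ d ≠ 0 := fun h => hd0 ((_root_.map_eq_zero φ).mp h)
        have hy0 : v ((x - φ c) * (φ d)⁻¹) = 0 := by
          rw [v.map_mul, v.map_inv, hdv]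
          exact LinearOrderedAddCommGroupWithTop.add_neg_cancel_of_ne_top (hdv ▸ hvne c)
        obtain ⟨e, he⟩ := himmr _ (le_of_eq hy0.symm)
        refine ⟨c + d * e, ?_⟩
        have hrw : x - φ (c + d * e) = φ d * ((x - φ c) * (φ d)⁻¹ - φ e) := by
          rw [map_add, map_mul]
          field_simp
          ring
        rw [hrw, v.map_mul, hdv]
        have hlt := WithTop.add_lt_add_left (hdv ▸ hvne c) he
        simpa using hlt
      -- reduce the degree of g when x is algebraic
      obtain ⟨g', hdeg, heq⟩ : ∃ g' : Polynomial K,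
          (IsAlgebraic K x → g'.natDegree < Module.finrank K L) ∧
          Polynomial.aeval x g' = Polynomial.aeval x g := by
        by_cases halg : IsAlgebraic K x
        · have hint : IsIntegral K x := halg.isIntegral
          have hfr : Module.finrank K L = (minpoly K x).natDegree := by
            have htop : IntermediateField.adjoin K {x} = ⊤ :=
              IntermediateField.adjoin_eq_top_of_algebra (hS := hgen)
            rw [← IntermediateField.finrank_top' (F := K) (E := L), ← htop,
              IntermediateField.adjoin.finrank hint]
          refine ⟨g %ₘ minpoly K x, fun _ => ?_,
            Polynomial.aeval_modByMonic_eq_self_of_root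
              (minpoly.aeval K x)⟩
          rw [hfr]
          exact Polynomial.natDegree_modByMonic_lt g (minpoly.monic hint) (minpoly.ne_one K x)
        · exact ⟨g, fun h => absurd h halg, rfl⟩
      set n := g'.natDegree with hn
      have hD : ∀ i : ℕ, ∃ c₀ : K, ∃ δ : WithTop Γ, ∀ c : K,
          v (x - φ c₀) ≤ v (x - φ c) →
          v (φ ((Polynomial.hasseDeriv i g').eval c)) = δ := by
        intro i
        exact hpure _ (fun halg => lt_of_le_of_lt
          (le_trans (Polynomial.natDegree_hasseDeriv_le g' i) (Nat.sub_le _ _)) (hdeg halg))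
      choose cc δ hδ using hD
      obtain ⟨imax, himax, hmax⟩ := Finset.exists_max_image (Finset.range (n + 1))
        (fun i => v (x - φ (cc i))) ⟨0, Finset.mem_range.mpr (Nat.succ_pos n)⟩
      -- the bad set of values
      set Bad : Set (WithTop Γ) := {γ | ∃ i ∈ Finset.range (n + 1), ∃ j ∈ Finset.range (n + 1),
        i ≠ j ∧ δ i ≠ ⊤ ∧ δ j ≠ ⊤ ∧ γ ≠ ⊤ ∧ δ i + i • γ = δ j + j • γ} with hBadDef
      have hBadFin : Bad.Finite := by
        have hsub : Bad ⊆ ⋃ i ∈ Finset.range (n + 1), ⋃ j ∈ Finset.range (n + 1),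
            {γ : WithTop Γ | i ≠ j ∧ δ i ≠ ⊤ ∧ δ j ≠ ⊤ ∧ γ ≠ ⊤ ∧ δ i + i • γ = δ j + j • γ} := by
          rintro γ ⟨i, hi, j, hj, h⟩
          exact Set.mem_biUnion hi (Set.mem_biUnion hj h)
        refine Set.Finite.subset ?_ hsub
        refine Set.Finite.biUnion (Finset.finite_toSet _) fun i _ =>
          Set.Finite.biUnion (Finset.finite_toSet _) fun j _ => ?_
        refine Set.Subsingleton.finite ?_
        rintro γ₁ ⟨hij, hdi, hdj, hγ₁, e₁⟩ γ₂ ⟨-, -, -, hγ₂, e₂⟩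
        lift γ₁ to Γ using hγ₁
        lift γ₂ to Γ using hγ₂
        lift δ i to Γ using hdi with di hdi'
        lift δ j to Γ using hdj with dj hdj'
        rw [← coe_nsmul_withTop, ← coe_nsmul_withTop, ← WithTop.coe_add, ← WithTop.coe_add,
          WithTop.coe_eq_coe] at e₁ e₂
        exact_mod_cast nsmul_eq_cancel hij e₁ e₂
      -- pick a good c
      have hexc : ∃ c : K, v (x - φ (cc imax)) ≤ v (x - φ c) ∧ v (x - φ c) ∉ Bad := by
        by_contra hcon
        push_neg at hcon
        set V : Set (WithTop Γ) :=
          {γ | ∃ c : K, v (x - φ (cc imax)) ≤ v (x - φ c) ∧ v (x - φ c) = γ} with hV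
        have hVB : V ⊆ Bad := by rintro γ ⟨c, h1, rfl⟩; exact hcon c h1
        have hVfin : V.Finite := hBadFin.subset hVB
        obtain ⟨γ0, hγ0V, hγ0max⟩ := Set.exists_max_image V id hVfin
          ⟨_, ⟨cc imax, le_refl _, rfl⟩⟩
        obtain ⟨c, hc1, hc2⟩ := hγ0V
        obtain ⟨c', hc'⟩ := hnomax c
        have hc'V : v (x - φ c') ∈ V := ⟨c', le_trans hc1 hc'.le, rfl⟩
        have hle := hγ0max _ hc'V
        rw [← hc2] at hle
        exact absurd (lt_of_lt_of_le hc' hle) (lt_irrefl _)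
      obtain ⟨c, hcα, hcBad⟩ := hexc
      refine ⟨c, ?_⟩
      set γ := v (x - φ c) with hγdef
      have hγt : γ ≠ ⊤ := hvne c
      have hδc : ∀ i ∈ Finset.range (n + 1),
          v (φ ((Polynomial.hasseDeriv i g').eval c)) = δ i :=
        fun i hi => hδ i c (le_trans (hmax i hi) hcα)
      set F : ℕ → L := fun i => φ ((Polynomial.hasseDeriv i g').eval c) * (x - φ c) ^ i with hF
      have hvF : ∀ i ∈ Finset.range (n + 1), v (F i) = δ i + i • γ := by
        intro i hi
        rw [hF]; dsimp only
        rw [v.map_mul, v.map_pow, hδc i hi]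
      have hsum : Polynomial.aeval x g = ∑ i ∈ Finset.range (n + 1), F i := by
        rw [← heq]; exact taylor_expand_aeval g' c x
      have hvsum : 0 ≤ v (∑ i ∈ Finset.range (n + 1), F i) := hsum ▸ hg
      have hnneg : ∀ i ∈ Finset.range (n + 1), 0 ≤ δ i + i • γ := by
        by_contra hcon
        push_neg at hcon
        obtain ⟨i₀, hi₀, hlt₀⟩ := hcon
        set S := (Finset.range (n + 1)).filter (fun i => δ i + i • γ < 0) with hS
        have hSne : S.Nonempty := ⟨i₀, Finset.mem_filter.mpr ⟨hi₀, hlt₀⟩⟩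
        obtain ⟨j, hjS, hjmin⟩ := Finset.exists_min_image S (fun i => δ i + i • γ) hSne
        obtain ⟨hjr, hjneg⟩ := Finset.mem_filter.mp hjS
        have hvFj : v (F j) = δ j + j • γ := hvF j hjr
        have hjtop : δ j + j • γ ≠ ⊤ := ne_top_of_lt hjneg
        have hδjtop : δ j ≠ ⊤ := fun h => hjtop (by rw [h, top_add])
        have hstrict : ∀ i ∈ Finset.range (n + 1), i ≠ j → v (F j) < v (F i) := by
          intro i hi hij
          rw [hvFj, hvF i hi]
          rcases le_or_gt 0 (δ i + i • γ) with h0 | h0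
          · exact lt_of_lt_of_le hjneg h0
          · rcases lt_or_eq_of_le (hjmin i (Finset.mem_filter.mpr ⟨hi, h0⟩)) with h | h
            · exact h
            · exfalso
              apply hcBad
              have hδitop : δ i ≠ ⊤ := fun hh => (ne_top_of_lt h0) (by rw [hh, top_add])
              exact ⟨j, hjr, i, hi, fun hh => hij hh.symm, hδjtop, hδitop, hγt, h⟩
        have hvs := addval_sum_eq v hjr (hvFj ▸ hjtop) hstrict
        rw [hvs, hvFj] at hvsum
        exact absurd (lt_of_le_of_lt hvsum hjneg) (lt_irrefl _)
      -- construct the membership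
      have hφtcv : v (φ (t c)) = -γ := ht c
      have hφtc : φ (t c) ≠ 0 := by
        intro h
        have : v (φ (t c)) = ⊤ := by rw [h]; exact v.map_zero
        rw [hφtcv] at this
        exact hγt (LinearOrderedAddCommGroupWithTop.neg_eq_top.mp this)
      have htc0 : t c ≠ 0 := fun h => hφtc (by rw [h, map_zero])
      set b : ℕ → K := fun i => (Polynomial.hasseDeriv i g').eval c / t c ^ i with hb
      have hFb : ∀ i : ℕ, F i = φ (b i) * (φ (t c) * (x - φ c)) ^ i := by
        intro i
        rw [hF, hb]; dsimp only
        rw [map_div₀, map_pow, mul_pow]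
        field_simp
      have hvb : ∀ i ∈ Finset.range (n + 1), 0 ≤ v (φ (b i)) := by
        intro i hi
        have h1 : φ (b i) * φ (t c) ^ i = φ ((Polynomial.hasseDeriv i g').eval c) := by
          rw [← map_pow, ← map_mul]
          congr 1
          rw [hb]; dsimp only
          field_simp
        have h2 : v (φ (b i)) + i • v (φ (t c)) = δ i := by
          rw [← v.map_pow, ← v.map_mul, h1, hδc i hi]
        have h3 : δ i + i • γ = v (φ (b i)) := by
          rw [← h2, hφtcv, add_assoc, ← nsmul_add]
          have hcancel : -γ + γ = 0 := by
            rw [add_comm]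
            exact LinearOrderedAddCommGroupWithTop.add_neg_cancel_of_ne_top hγt
          rw [hcancel, smul_zero, add_zero]
        rw [← h3]
        exact hnneg i hi
      rw [hsum]
      refine Subalgebra.sum_mem _ fun i hi => ?_
      rw [hFb i]
      refine Subalgebra.mul_mem _ ?_ (Subalgebra.pow_mem _
        (Algebra.subset_adjoin (Set.mem_singleton _)) i)
      have hbmem : b i ∈ ringOfInts K v := hmem_ints _ (hvb i hi)
      rw [← halg_eq _ hbmem]
      exact Subalgebra.algebraMap_mem _ _
  refine ⟨key, ?_⟩
  intro halg
  apply Set.Subset.antisymm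
  · intro y hy
    have hy' : y ∈ Algebra.adjoin K {x} := by rw [hgen]; trivial
    rw [Algebra.adjoin_singleton_eq_range_aeval] at hy'
    obtain ⟨g, hgy⟩ := hy'
    have hgy' : Polynomial.aeval x g = y := hgy
    obtain ⟨c, hc⟩ := key g (by rw [hgy']; exact hy)
    exact Set.mem_iUnion.mpr ⟨c, by rw [← hgy']; exact hc⟩
  · intro y hy
    obtain ⟨c, hc⟩ := Set.mem_iUnion.mp hy
    set T : Subalgebra (ringOfInts K v) L :=
      { v.intsSubring.toSubsemiring with algebraMap_mem' := fun r => r.2 } with hT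
    have hle : Algebra.adjoin (ringOfInts K v) {φ (t c) * (x - φ c)} ≤ T := by
      refine Algebra.adjoin_le ?_
      intro z hz
      rw [Set.mem_singleton_iff.mp hz]
      show 0 ≤ v (φ (t c) * (x - φ c))
      rw [v.map_mul, ht c]
      by_cases h : v (x - φ c) = ⊤
      · rw [h, add_top]; exact le_top
      · rw [add_comm, LinearOrderedAddCommGroupWithTop.add_neg_cancel_of_ne_top h]
    exact hle hc
end

section
/- Let (L|K,v) be an Artin-Schreier defect extension of degree p with Artin-Schreier generator θ. For each c ∈ K choose t_c ∈ K with v(t_c) = −v(θ−c), set θ_c := t_c·(θ−c), and let g_c ∈ K[X] be the minimal polynomial of θ_c over K. Let I be the O_L-ideal generated by {t_c : c ∈ K}. Then: (i) g_c'(θ_c) = −t_c^{p−1} for every c ∈ K; (ii) the O_L-ideal generated by {g_c'(θ_c) : c ∈ K} equals I^{p−1}; (iii) the nonzero elements of I are exactly those x ∈ L for which there is c ∈ K with v(x) ≥ −v(θ−c). -/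
open Polynomial

section Aux
variable {K L Γ : Type} [Field K] [Field L] [Algebra K L] [AddCommGroup Γ] [LinearOrder Γ] [IsOrderedAddMonoid Γ]

lemma aux_mem_ints {v : AddValuation L (WithTop Γ)} {x : L} :
    x ∈ v.intsSubring ↔ 0 ≤ v x := Iff.rfl

lemma aux_minpoly_eq (hfd : FiniteDimensional K L) {ξ : L}
    (hgen : Algebra.adjoin K {ξ} = ⊤) {g : K[X]} (hm : g.Monic)
    (hdg : g.natDegree = Module.finrank K L) (hz : Polynomial.aeval ξ g = 0) :
    minpoly K ξ = g := by
  have hint : IsIntegral K ξ := IsIntegral.of_finite K ξ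
  have htop : IntermediateField.adjoin K {ξ} = ⊤ :=
    IntermediateField.adjoin_eq_top_of_algebra (hS := hgen)
  have hnd : (minpoly K ξ).natDegree = Module.finrank K L := by
    rw [← IntermediateField.adjoin.finrank hint, htop, IntermediateField.finrank_top']
  obtain ⟨q, hq⟩ := minpoly.dvd K ξ hz
  have h0 : minpoly K ξ ≠ 0 := minpoly.ne_zero hint
  have hq0 : q ≠ 0 := by rintro rfl; rw [mul_zero] at hq; exact hm.ne_zero hq
  have hnq : q.natDegree = 0 := by
    have h2 := Polynomial.natDegree_mul h0 hq0
    rw [← hq, hdg, hnd] at h2; omega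
  have hlq : q.leadingCoeff = 1 := by
    have h3 := hm.leadingCoeff
    rw [hq, Polynomial.leadingCoeff_mul, (minpoly.monic hint).leadingCoeff, one_mul] at h3
    exact h3
  have hq1 : q = 1 := by
    rw [Polynomial.eq_C_of_natDegree_eq_zero hnq]
    rw [Polynomial.leadingCoeff, hnq] at hlq; rw [hlq, map_one]
  rw [hq, hq1, mul_one]

lemma aux_span_crit (v : AddValuation L (WithTop Γ)) {S : Set v.intsSubring}
    {y : v.intsSubring} (hy : y ∈ Ideal.span S) :
    (y : L) = 0 ∨ ∃ z ∈ S, v (z : L) ≤ v (y : L) := by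
  refine Submodule.span_induction ?_ ?_ ?_ ?_ hy
  · intro z hz; exact Or.inr ⟨z, hz, le_rfl⟩
  · exact Or.inl rfl
  · rintro x y hx hy (hx0 | ⟨zx, hzx, hvx⟩) (hy0 | ⟨zy, hzy, hvy⟩)
    · left; push_cast; rw [hx0, hy0, add_zero]
    · right; refine ⟨zy, hzy, ?_⟩
      push_cast
      refine le_trans (le_min ?_ hvy) (v.map_add _ _)
      rw [hx0, v.map_zero]; exact le_top
    · right; refine ⟨zx, hzx, ?_⟩
      push_cast
      refine le_trans (le_min hvx ?_) (v.map_add _ _)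
      rw [hy0, v.map_zero]; exact le_top
    · rcases le_total (v (zx : L)) (v (zy : L)) with hle | hle
      · right; refine ⟨zx, hzx, ?_⟩
        push_cast
        exact le_trans (le_min hvx (le_trans hle hvy)) (v.map_add _ _)
      · right; refine ⟨zy, hzy, ?_⟩
        push_cast
        exact le_trans (le_min (le_trans hle hvx) hvy) (v.map_add _ _)
  · rintro r x hx (hx0 | ⟨z, hz, hv⟩)
    · left
      have : ((r • x : v.intsSubring) : L) = (r : L) * (x : L) := rfl
      rw [this, hx0, mul_zero]
    · right; refine ⟨z, hz, ?_⟩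
      have hco : ((r • x : v.intsSubring) : L) = (r : L) * (x : L) := rfl
      rw [hco, v.map_mul]
      exact le_trans hv (le_add_of_nonneg_left r.2)

lemma aux_mem_span_of_le (v : AddValuation L (WithTop Γ)) {S : Set v.intsSubring}
    {z : v.intsSubring} (hz : z ∈ S) (hzne : (z : L) ≠ 0) {y : v.intsSubring}
    (h : v (z : L) ≤ v (y : L)) : y ∈ Ideal.span S := by
  have hvz : v (z : L) ≠ ⊤ := v.ne_top_iff.mpr hzne
  have hr : (0 : WithTop Γ) ≤ v ((y : L) / (z : L)) := by
    rw [AddValuation.map_div]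
    obtain ⟨γ, hγ⟩ := WithTop.ne_top_iff_exists.mp hvz
    rcases eq_or_ne (v (y : L)) ⊤ with htp | hne
    · rw [htp, ← hγ]
      simp
    · obtain ⟨δ, hδ⟩ := WithTop.ne_top_iff_exists.mp hne
      rw [← hγ, ← hδ, ← WithTop.LinearOrderedAddCommGroup.coe_sub]
      rw [← hγ, ← hδ] at h
      exact_mod_cast sub_nonneg.mpr (WithTop.coe_le_coe.mp h)
  have hy : y = (⟨(y : L) / (z : L), hr⟩ : v.intsSubring) * z :=
    Subtype.ext (div_mul_cancel₀ _ hzne).symm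
  rw [hy]
  exact Ideal.mul_mem_left _ _ (Ideal.subset_span hz)

end Aux


/-- **Lemma (values of derivatives, Artin-Schreier case).** Let `(L|K,v)` be an
Artin-Schreier defect extension of degree `p` with Artin-Schreier generator `θ`.
With `θ_c := t_c·(θ−c)` and `g_c` the minimal polynomial of `θ_c` over `K`:
(i) `g_c'(θ_c) = −t_c^{p−1}`;
(ii) the `O_L`-ideal generated by the `g_c'(θ_c)` equals `I^{p−1}`, where `I` is the
`O_L`-ideal generated by the `t_c`;
(iii) the nonzero elements of `I` are exactly the `x ∈ L` with `v(x) ≥ −v(θ−c)` for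
some `c ∈ K`. -/
theorem stmt9 {K L Γ : Type} [Field K] [Field L] [Algebra K L]
    [AddCommGroup Γ] [LinearOrder Γ] [IsOrderedAddMonoid Γ]
    (v : AddValuation L (WithTop Γ)) (p : ℕ) (hp : p.Prime) [CharP K p]
    -- `[L : K] = p`
    (hdeg : Module.finrank K L = p)
    -- the residue characteristic equals `p`
    (hresp : (0 : WithTop Γ) < v (p : L))
    -- the extension is unibranched
    (hunib : ∀ (Γ' : Type) [AddCommGroup Γ'] [LinearOrder Γ'] [IsOrderedAddMonoid Γ']
      (w : AddValuation L (WithTop Γ')),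
      (w.comap (algebraMap K L)).IsEquiv (v.comap (algebraMap K L)) → w.IsEquiv v)
    -- `L = K(θ)` with `θ^p − θ = a ∈ K`
    (θ : L) (hgen : Algebra.adjoin K {θ} = ⊤)
    (a : K) (hAS : θ ^ p - θ = algebraMap K L a)
    -- the elements `t c`
    (t : K → K)
    (ht : ∀ c : K, v (algebraMap K L (t c)) = - v (θ - algebraMap K L c)) :
    (∀ c : K,
      Polynomial.aeval (algebraMap K L (t c) * (θ - algebraMap K L c))
          (Polynomial.derivative
            (minpoly K (algebraMap K L (t c) * (θ - algebraMap K L c)))) =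
        - (algebraMap K L (t c)) ^ (p - 1)) ∧
    (Ideal.span {x : v.intsSubring | ∃ c : K,
        (x : L) = Polynomial.aeval (algebraMap K L (t c) * (θ - algebraMap K L c))
          (Polynomial.derivative
            (minpoly K (algebraMap K L (t c) * (θ - algebraMap K L c))))} =
      (Ideal.span {x : v.intsSubring | ∃ c : K, (x : L) = algebraMap K L (t c)}) ^
        (p - 1)) ∧
    (∀ x : L,
      ((∃ y : v.intsSubring, (y : L) = x ∧
          y ∈ Ideal.span {z : v.intsSubring | ∃ c : K, (z : L) = algebraMap K L (t c)}) ∧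
        x ≠ 0) ↔
      (x ≠ 0 ∧ ∃ c : K, - v (θ - algebraMap K L c) ≤ v x)) := by
  classical
  have hp2 : 2 ≤ p := hp.two_le
  haveI hpfact : Fact p.Prime := ⟨hp⟩
  haveI : CharP L p := charP_of_injective_algebraMap (algebraMap K L).injective p
  have hfd : FiniteDimensional K L := FiniteDimensional.of_finrank_pos (hdeg ▸ hp.pos)
  have hθp : θ ^ p = algebraMap K L a + θ := by rw [← hAS]; ring
  -- θ is not in (the image of) K
  have hθc : ∀ c : K, θ - algebraMap K L c ≠ 0 := by
    intro c hc
    rw [sub_eq_zero] at hc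
    have hle : Algebra.adjoin K {θ} ≤ ⊥ := by
      rw [Algebra.adjoin_le_iff, Set.singleton_subset_iff]
      exact ⟨c, hc.symm⟩
    have hbot : (⊥ : Subalgebra K L) = ⊤ := le_antisymm le_top (hgen ▸ hle)
    have := Subalgebra.bot_eq_top_iff_finrank_eq_one.mp hbot
    omega
  have hvne : ∀ c : K, v (θ - algebraMap K L c) ≠ ⊤ := fun c => v.ne_top_iff.mpr (hθc c)
  have ht0 : ∀ c : K, t c ≠ 0 := by
    intro c hc
    have h1 := ht c
    rw [hc, map_zero, v.map_zero] at h1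
    obtain ⟨γ, hγ⟩ := WithTop.ne_top_iff_exists.mp (hvne c)
    rw [← hγ] at h1
    exact WithTop.coe_ne_top ((WithTop.LinearOrderedAddCommGroup.coe_neg γ).trans h1.symm)
  have hτ0 : ∀ c : K, algebraMap K L (t c) ≠ 0 := fun c h =>
    ht0 c ((algebraMap K L).injective (h.trans (map_zero _).symm))
  -- minimal polynomial of θ
  have hintθ : IsIntegral K θ := IsIntegral.of_finite K θ
  have hminθ : minpoly K θ = Polynomial.X ^ p - Polynomial.X - Polynomial.C a := by
    apply aux_minpoly_eq hfd hgen
    · rw [show (Polynomial.X ^ p - Polynomial.X - Polynomial.C a : Polynomial K)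
        = Polynomial.X ^ p - (Polynomial.X + Polynomial.C a) by ring]
      apply Polynomial.monic_X_pow_sub
      rw [Polynomial.degree_X_add_C]
      exact_mod_cast hp.one_lt
    · rw [hdeg, show (Polynomial.X ^ p - Polynomial.X - Polynomial.C a : Polynomial K)
        = Polynomial.X ^ p - (Polynomial.X + Polynomial.C a) by ring]
      rw [Polynomial.natDegree_sub_eq_left_of_natDegree_lt
        (by rw [Polynomial.natDegree_X_add_C, Polynomial.natDegree_X_pow]; omega),
        Polynomial.natDegree_X_pow]
    · rw [map_sub, map_sub, Polynomial.aeval_X_pow, Polynomial.aeval_X, Polynomial.aeval_C,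
        hAS, sub_self]
  -- the Artin-Schreier automorphism
  have htopI : IntermediateField.adjoin K {θ} = ⊤ :=
    IntermediateField.adjoin_eq_top_of_algebra (hS := hgen)
  let e : (IntermediateField.adjoin K ({θ} : Set L)) ≃ₐ[K] L :=
    (IntermediateField.equivOfEq htopI).trans IntermediateField.topEquiv
  let pbL := (IntermediateField.adjoin.powerBasis hintθ).map e
  have hgenpb : pbL.gen = θ := by
    show e (IntermediateField.AdjoinSimple.gen K θ) = θ
    rfl
  have haev : Polynomial.aeval (θ + 1) (minpoly K pbL.gen) = 0 := by
    rw [hgenpb, hminθ]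
    simp only [map_sub, Polynomial.aeval_X_pow, Polynomial.aeval_X, Polynomial.aeval_C]
    rw [add_pow_char, one_pow, hθp]
    ring
  let σ : L →ₐ[K] L := pbL.lift (θ + 1) haev
  have hσθ : σ θ = θ + 1 := by rw [← hgenpb]; exact pbL.lift_gen _ haev
  let w : AddValuation L (WithTop Γ) := v.comap σ.toRingHom
  have hwv : w.IsEquiv v := by
    apply hunib
    apply AddValuation.IsEquiv.of_eq
    apply AddValuation.ext
    intro r
    show v (σ (algebraMap K L r)) = v (algebraMap K L r)
    rw [σ.commutes]
  have hvle : ∀ c : K, v (θ - algebraMap K L c) ≤ 0 := by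
    intro c
    rcases le_or_gt (v (θ - algebraMap K L c)) 0 with h | h
    · exact h
    · have h1 : w (θ - algebraMap K L c) = 0 := by
        show v (σ (θ - algebraMap K L c)) = 0
        rw [map_sub, hσθ, σ.commutes]
        rw [show θ + 1 - algebraMap K L c = (θ - algebraMap K L c) + 1 by ring]
        rw [AddValuation.map_add_eq_of_lt_right]
        · exact v.map_one
        · rw [v.map_one]; exact h
      have h3 : w (θ - algebraMap K L c) ≤ w 1 ↔ v (θ - algebraMap K L c) ≤ v 1 :=
        hwv 1 (θ - algebraMap K L c)
      have h4 : v (θ - algebraMap K L c) ≤ v 1 := by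
        apply h3.mp
        rw [h1, AddValuation.map_one]
      rw [v.map_one] at h4
      exact h4
  have hvt : ∀ c : K, (0 : WithTop Γ) ≤ v (algebraMap K L (t c)) := by
    intro c
    rw [ht c]
    obtain ⟨γ, hγ⟩ := WithTop.ne_top_iff_exists.mp (hvne c)
    have hγle : (γ : WithTop Γ) ≤ 0 := hγ.symm ▸ hvle c
    have hγ0 : γ ≤ 0 := by exact_mod_cast hγle
    rw [← hγ, ← WithTop.LinearOrderedAddCommGroup.coe_neg]
    exact_mod_cast neg_nonneg.mpr hγ0
  -- part (i): the minimal polynomial of θ_c and its derivative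
  have hmin : ∀ c : K, minpoly K (algebraMap K L (t c) * (θ - algebraMap K L c)) =
      Polynomial.X ^ p - Polynomial.C (t c ^ (p - 1)) * Polynomial.X
        - Polynomial.C (t c ^ p * (a + c - c ^ p)) := by
    intro c
    apply aux_minpoly_eq hfd
    · rw [eq_top_iff, ← hgen]
      rw [Algebra.adjoin_le_iff, Set.singleton_subset_iff]
      have h1 : θ = algebraMap K L (t c)⁻¹
          * (algebraMap K L (t c) * (θ - algebraMap K L c)) + algebraMap K L c := by
        rw [← mul_assoc, ← map_mul, inv_mul_cancel₀ (ht0 c), map_one, one_mul]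
        ring
      have h2 := add_mem
        (mul_mem ((Algebra.adjoin K {algebraMap K L (t c) * (θ - algebraMap K L c)}).algebraMap_mem
          ((t c)⁻¹))
          (Algebra.self_mem_adjoin_singleton K (algebraMap K L (t c) * (θ - algebraMap K L c))))
        ((Algebra.adjoin K {algebraMap K L (t c) * (θ - algebraMap K L c)}).algebraMap_mem c)
      rwa [← h1] at h2
    · rw [show (Polynomial.X ^ p - Polynomial.C (t c ^ (p - 1)) * Polynomial.X
          - Polynomial.C (t c ^ p * (a + c - c ^ p)) : Polynomial K)
        = Polynomial.X ^ p - (Polynomial.C (t c ^ (p - 1)) * Polynomial.X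
          + Polynomial.C (t c ^ p * (a + c - c ^ p))) by ring]
      apply Polynomial.monic_X_pow_sub
      refine lt_of_le_of_lt (Polynomial.degree_linear_le) ?_
      exact_mod_cast hp.one_lt
    · rw [hdeg, show (Polynomial.X ^ p - Polynomial.C (t c ^ (p - 1)) * Polynomial.X
          - Polynomial.C (t c ^ p * (a + c - c ^ p)) : Polynomial K)
        = Polynomial.X ^ p - (Polynomial.C (t c ^ (p - 1)) * Polynomial.X
          + Polynomial.C (t c ^ p * (a + c - c ^ p))) by ring]
      rw [Polynomial.natDegree_sub_eq_left_of_natDegree_lt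
        (lt_of_le_of_lt (Polynomial.natDegree_linear_le)
          (by rw [Polynomial.natDegree_X_pow]; omega)),
        Polynomial.natDegree_X_pow]
    · simp only [map_sub, map_mul, Polynomial.aeval_X_pow, Polynomial.aeval_X,
        Polynomial.aeval_C, map_add, map_pow]
      rw [mul_pow, sub_pow_char, hθp]
      have hpp : (algebraMap K L (t c)) ^ (p - 1) * algebraMap K L (t c)
          = algebraMap K L (t c) ^ p := by
        rw [← pow_succ]; congr 1; omega
      rw [← mul_assoc, hpp]
      ring
  have hder : ∀ c : K,
      Polynomial.aeval (algebraMap K L (t c) * (θ - algebraMap K L c))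
        (Polynomial.derivative
          (minpoly K (algebraMap K L (t c) * (θ - algebraMap K L c)))) =
      - (algebraMap K L (t c)) ^ (p - 1) := by
    intro c
    rw [hmin c]
    simp only [Polynomial.derivative_sub, Polynomial.derivative_X_pow,
      Polynomial.derivative_C_mul, Polynomial.derivative_X, Polynomial.derivative_C, mul_one,
      sub_zero]
    rw [CharP.cast_eq_zero K p]
    simp [map_pow]
  -- the elements t_c as elements of the valuation ring
  let T : K → v.intsSubring := fun c => ⟨algebraMap K L (t c), hvt c⟩
  have hTcoe : ∀ c : K, ((T c : v.intsSubring) : L) = algebraMap K L (t c) := fun _ => rfl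
  -- powers of the ideal I
  let Sn : ℕ → Set v.intsSubring :=
    fun n => {z : v.intsSubring | ∃ c : K, (z : L) = (algebraMap K L (t c)) ^ n}
  have hS1 : {x : v.intsSubring | ∃ c : K, (x : L) = algebraMap K L (t c)} = Sn 1 := by
    ext z
    exact exists_congr fun c => by rw [pow_one]
  have hpow : ∀ n : ℕ, Ideal.span (Sn 1) ^ (n + 1) = Ideal.span (Sn (n + 1)) := by
    intro n
    induction n with
    | zero => rw [pow_one]
    | succ n ih =>
      rw [pow_succ, ih, Ideal.span_mul_span']
      apply le_antisymm
      · rw [Ideal.span_le]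
        rintro x ⟨y, hy, z, hz, rfl⟩
        obtain ⟨c, hc⟩ := hy
        obtain ⟨d, hd⟩ := hz
        have hyz : ((y * z : v.intsSubring) : L)
            = (algebraMap K L (t c)) ^ (n + 1) * (algebraMap K L (t d)) ^ 1 := by
          push_cast
          rw [hc, hd]
        rcases le_total (v (algebraMap K L (t c))) (v (algebraMap K L (t d))) with hle | hle
        · refine SetLike.mem_coe.mpr (aux_mem_span_of_le v (S := Sn (n + 1 + 1)) (z := T c ^ (n + 1 + 1))
            ⟨c, by push_cast; rfl⟩ ?_ ?_)
          · show (algebraMap K L (t c)) ^ (n + 1 + 1) ≠ 0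
            exact pow_ne_zero _ (hτ0 c)
          · show v ((algebraMap K L (t c)) ^ (n + 1 + 1)) ≤ _
            rw [hyz, v.map_mul, v.map_pow, v.map_pow, v.map_pow, succ_nsmul]
            rw [one_smul]
            exact add_le_add_right hle _
        · refine SetLike.mem_coe.mpr (aux_mem_span_of_le v (S := Sn (n + 1 + 1)) (z := T d ^ (n + 1 + 1))
            ⟨d, by push_cast; rfl⟩ ?_ ?_)
          · show (algebraMap K L (t d)) ^ (n + 1 + 1) ≠ 0
            exact pow_ne_zero _ (hτ0 d)
          · show v ((algebraMap K L (t d)) ^ (n + 1 + 1)) ≤ _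
            rw [hyz, v.map_mul, v.map_pow, v.map_pow, v.map_pow, succ_nsmul]
            rw [one_smul]
            exact add_le_add_left (nsmul_le_nsmul_right hle _) _
      · rw [Ideal.span_le]
        rintro x ⟨c, hc⟩
        have hx : x = T c ^ (n + 1) * T c := by
          apply Subtype.ext
          push_cast
          rw [hc, pow_succ]
        rw [hx]
        refine SetLike.mem_coe.mpr (Ideal.subset_span ?_)
        exact ⟨T c ^ (n + 1), ⟨c, by push_cast; rfl⟩, T c, ⟨c, by rw [pow_one]⟩, rfl⟩
  refine ⟨hder, ?_, ?_⟩
  · -- part (ii)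
    have hp1 : p - 1 = (p - 2) + 1 := by omega
    have e1 : {x : v.intsSubring | ∃ c : K,
        (x : L) = Polynomial.aeval (algebraMap K L (t c) * (θ - algebraMap K L c))
          (Polynomial.derivative
            (minpoly K (algebraMap K L (t c) * (θ - algebraMap K L c))))}
        = {x : v.intsSubring | ∃ c : K, (x : L) = - (algebraMap K L (t c)) ^ (p - 1)} :=
      Set.ext fun x => exists_congr fun c => by rw [hder c]
    rw [e1, hS1, hp1, hpow (p - 2), ← hp1]
    apply le_antisymm
    · rw [Ideal.span_le]
      rintro x ⟨c, hc⟩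
      have hx : x = -(T c ^ (p - 1)) := by
        apply Subtype.ext
        push_cast
        rw [hc]
      rw [hx]
      exact SetLike.mem_coe.mpr (neg_mem (Ideal.subset_span ⟨c, by push_cast; rfl⟩))
    · rw [Ideal.span_le]
      rintro x ⟨c, hc⟩
      have hx : x = -(-(T c ^ (p - 1))) := by
        apply Subtype.ext
        push_cast
        rw [hc, neg_neg]
      rw [hx]
      refine SetLike.mem_coe.mpr (neg_mem (Ideal.subset_span ⟨c, ?_⟩))
      push_cast
      rfl
  · -- part (iii)
    intro x
    constructor
    · rintro ⟨⟨y, hyx, hyI⟩, hxne⟩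
      refine ⟨hxne, ?_⟩
      rcases aux_span_crit v hyI with h0 | ⟨z, ⟨c, hc⟩, hvz⟩
      · exact absurd (h0.symm.trans hyx).symm hxne
      · refine ⟨c, ?_⟩
        rw [← ht c, ← hc, ← hyx]
        exact hvz
    · rintro ⟨hxne, c, hc⟩
      rw [← ht c] at hc
      have hx0 : (0 : WithTop Γ) ≤ v x := le_trans (hvt c) hc
      refine ⟨⟨⟨x, hx0⟩, rfl, ?_⟩, hxne⟩
      exact aux_mem_span_of_le v (S := {z : v.intsSubring | ∃ c : K, (z : L) = algebraMap K L (t c)}) (z := T c) ⟨c, rfl⟩ (hτ0 c) hc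
end

section
/- Let A be an integrally closed domain with quotient field K, let L|K be an algebraic field extension, and let B be a domain with quotient field L such that A ⊆ B is an integral ring extension. Let S be a nonempty totally ordered set and (b_α)_{α∈S} elements of B such that A[b_α] ⊆ A[b_β] whenever α ≤ β, and ⋃_{α∈S} A[b_α] = B. Suppose there are nonzero elements (a_α)_{α∈S} of A such that for all α ≤ β there exist d_{α,β}, c_{α,β} ∈ A with a_α = d_{α,β}·a_β and b_α = d_{α,β}·b_β + c_{α,β}. Let h_α ∈ K[X] be the minimal polynomial of b_α over K, let U be the ideal of B generated by {a_α : α ∈ S}, and let V be the ideal of B generated by {h_α'(b_α) : α ∈ S}. Then there is an isomorphism of B-modules Ω_{B|A} ≅ U/UV, where U/UV is the quotient of the B-module U by its submodule U·V. -/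
open Polynomial
set_option linter.unusedSectionVars false

section aux

variable {A B K L : Type} [CommRing A] [IsDomain A] [CommRing B] [IsDomain B]
  [Field K] [Field L]
  [Algebra A K] [IsFractionRing A K]
  [Algebra B L] [IsFractionRing B L]
  [Algebra A B] [Algebra K L] [Algebra A L]
  [IsScalarTower A K L] [IsScalarTower A B L]
  [IsIntegrallyClosed A]
  [Algebra.IsAlgebraic K L] [Algebra.IsIntegral A B]

include K L in
theorem aux11_injAB : Function.Injective (algebraMap A B) := by
  have hi : Function.Injective (algebraMap A L) := by
    rw [IsScalarTower.algebraMap_eq A K L]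
    exact (algebraMap K L).injective.comp (IsFractionRing.injective A K)
  intro x y e
  apply hi
  rw [IsScalarTower.algebraMap_eq A B L, RingHom.comp_apply, RingHom.comp_apply, e]

/-- `h'(x)` for `h` the minimal polynomial over `A`. -/
noncomputable def aux11_Hd (A : Type) {B : Type} [CommRing A] [CommRing B] [Algebra A B]
    (x : B) : B :=
  aeval x (derivative (minpoly A x))

theorem aux11_minpolyL (x : B) :
    minpoly K (algebraMap B L x) = (minpoly A x).map (algebraMap A K) :=
  minpoly.isIntegrallyClosed_eq_field_fractions K L (Algebra.IsIntegral.isIntegral x)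

/-- The generating set of `V` in the statement is the range of `aux11_Hd`. -/
theorem aux11_Vset {S : Type} (b : S → B) :
    {x : B | ∃ α : S,
        algebraMap B L x =
          Polynomial.aeval (algebraMap B L (b α))
            (Polynomial.derivative (minpoly K (algebraMap B L (b α))))} =
      Set.range (fun α : S => aux11_Hd A (b α)) := by
  have key : ∀ α : S,
      Polynomial.aeval (algebraMap B L (b α))
        (Polynomial.derivative (minpoly K (algebraMap B L (b α)))) =
      algebraMap B L (aux11_Hd A (b α)) := by
    intro α
    rw [aux11_minpolyL (A := A), derivative_map, aeval_map_algebraMap, aux11_Hd,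
      aeval_algebraMap_apply]
  ext x
  constructor
  · rintro ⟨α, hx⟩
    exact ⟨α, (IsFractionRing.injective B L (by rw [hx, key α])).symm⟩
  · rintro ⟨α, rfl⟩
    exact ⟨α, (key α).symm⟩

include K L in
/-- If `p ∈ A[X]` kills `x`, it is a multiple of the minimal polynomial. -/
theorem aux11_mod (x : B) (p : A[X]) (hp : aeval x p = 0) :
    p = minpoly A x * (p /ₘ minpoly A x) := by
  have hint : IsIntegral A x := Algebra.IsIntegral.isIntegral x
  have hmon : (minpoly A x).Monic := minpoly.monic hint
  have h0 : p %ₘ minpoly A x = 0 := by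
    set r := p %ₘ minpoly A x with hr
    have hre : r = p - minpoly A x * (p /ₘ minpoly A x) := modByMonic_eq_sub_mul_div p (minpoly A x)
    have h1 : aeval x r = 0 := by
      rw [hre, map_sub, map_mul, minpoly.aeval, zero_mul, hp, sub_zero]
    have h2 : aeval (algebraMap B L x) (r.map (algebraMap A K)) = 0 := by
      rw [aeval_map_algebraMap, aeval_algebraMap_apply, h1, map_zero]
    by_contra hne
    have hKne : r.map (algebraMap A K) ≠ 0 := by
      simpa [Polynomial.map_eq_zero_iff (IsFractionRing.injective A K)] using hne
    have hdeg := minpoly.degree_le_of_ne_zero K (algebraMap B L x) hKne h2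
    rw [aux11_minpolyL (A := A)] at hdeg
    have hlt : r.degree < (minpoly A x).degree := degree_modByMonic_lt p hmon
    rw [degree_map_eq_of_injective (IsFractionRing.injective A K) r,
      degree_map_eq_of_injective (IsFractionRing.injective A K)] at hdeg
    exact absurd (lt_of_le_of_lt hdeg hlt) (lt_irrefl _)
  conv_lhs => rw [← modByMonic_add_div p (minpoly A x)]
  rw [h0, zero_add]

include K L in
/-- Key: if `p` kills `x` then `p'(x)` factors through `h'(x)`. -/
theorem aux11_deriv_factor (x : B) (p : A[X]) (hp : aeval x p = 0) :
    aeval x (derivative p) = aux11_Hd A x * aeval x (p /ₘ minpoly A x) := by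
  have h := aux11_mod (K := K) (L := L) x p hp
  conv_lhs => rw [h]
  rw [derivative_mul, map_add, map_mul, map_mul, minpoly.aeval, zero_mul, add_zero]
  rfl


theorem aux11_comp_eval (x y : B) (dd cc : A)
    (hxy : x = algebraMap A B dd * y + algebraMap A B cc) (f : A[X]) :
    aeval y (f.comp (C dd * X + C cc)) = aeval x f := by
  rw [aeval_comp]
  congr 1
  simp [hxy, Algebra.smul_def]

theorem aux11_comp_deriv (x y : B) (dd cc : A)
    (hxy : x = algebraMap A B dd * y + algebraMap A B cc) (f : A[X]) :
    aeval y (derivative (f.comp (C dd * X + C cc)))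
      = algebraMap A B dd * aeval x (derivative f) := by
  rw [derivative_comp, map_mul, aux11_comp_eval x y dd cc hxy]
  congr 1
  simp

include K L in
theorem aux11_deg_eq (x y : B) (dd cc : A) (hdd : dd ≠ 0)
    (hxy : x = algebraMap A B dd * y + algebraMap A B cc) :
    (minpoly A x).natDegree = (minpoly A y).natDegree := by
  have hmx : ((minpoly A x).map (algebraMap A K)).natDegree = (minpoly A x).natDegree :=
    natDegree_map_eq_of_injective (IsFractionRing.injective A K) _
  have hmy : ((minpoly A y).map (algebraMap A K)).natDegree = (minpoly A y).natDegree :=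
    natDegree_map_eq_of_injective (IsFractionRing.injective A K) _
  rw [← hmx, ← hmy, ← aux11_minpolyL (A := A) (K := K) (L := L) x,
    ← aux11_minpolyL (A := A) (K := K) (L := L) y]
  have hintx : IsIntegral K (algebraMap B L x) :=
    (Algebra.IsAlgebraic.isAlgebraic (R := K) (A := L) (algebraMap B L x)).isIntegral
  have hinty : IsIntegral K (algebraMap B L y) :=
    (Algebra.IsAlgebraic.isAlgebraic (R := K) (A := L) (algebraMap B L y)).isIntegral
  rw [← IntermediateField.adjoin.finrank hintx, ← IntermediateField.adjoin.finrank hinty]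
  set u : L := algebraMap K L (algebraMap A K dd) with hu
  set v : L := algebraMap K L (algebraMap A K cc) with hv
  have habl : ∀ t : A, algebraMap B L (algebraMap A B t) = algebraMap K L (algebraMap A K t) := by
    intro t
    rw [← IsScalarTower.algebraMap_apply A B L, ← IsScalarTower.algebraMap_apply A K L]
  have hxyL : algebraMap B L x = u * algebraMap B L y + v := by
    rw [hxy, map_add, map_mul, hu, hv, habl, habl]
  have hune : u ≠ 0 := by
    simp only [hu, map_ne_zero_iff _ (algebraMap K L).injective,
      map_ne_zero_iff _ (IsFractionRing.injective A K)]
    exact hdd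
  have hadj : IntermediateField.adjoin K {algebraMap B L x}
      = IntermediateField.adjoin K {algebraMap B L y} := by
    apply le_antisymm
    · rw [IntermediateField.adjoin_simple_le_iff, hxyL]
      exact add_mem (mul_mem (IntermediateField.algebraMap_mem _ _)
        (IntermediateField.mem_adjoin_simple_self K _))
        (IntermediateField.algebraMap_mem _ _)
    · rw [IntermediateField.adjoin_simple_le_iff]
      have : algebraMap B L y = u⁻¹ * (algebraMap B L x - v) := by
        rw [hxyL, add_sub_cancel_right, inv_mul_cancel_left₀ hune]
      rw [this]
      exact mul_mem (inv_mem (IntermediateField.algebraMap_mem _ _))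
        (sub_mem (IntermediateField.mem_adjoin_simple_self K _)
          (IntermediateField.algebraMap_mem _ _))
  rw [hadj]

include K L in
theorem aux11_Hd_rel (x y : B) (dd cc : A) (hdd : dd ≠ 0)
    (hxy : x = algebraMap A B dd * y + algebraMap A B cc) :
    aux11_Hd A x
      = algebraMap A B dd ^ ((minpoly A y).natDegree - 1) * aux11_Hd A y := by
  have hddB : algebraMap A B dd ≠ 0 := fun h => hdd
    (aux11_injAB (K := K) (L := L) (A := A) (B := B)
      (show algebraMap A B dd = algebraMap A B 0 by simpa using h))
  set n : ℕ := (minpoly A y).natDegree with hn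
  have hinty : IsIntegral A y := Algebra.IsIntegral.isIntegral y
  have hmony : (minpoly A y).Monic := minpoly.monic hinty
  have hnpos : 0 < n := minpoly.natDegree_pos hinty
  set p : A[X] := (minpoly A x).comp (C dd * X + C cc) with hpdef
  have hp0 : aeval y p = 0 := by
    rw [hpdef, aux11_comp_eval x y dd cc hxy, minpoly.aeval]
  have hfac : p = minpoly A y * (p /ₘ minpoly A y) := aux11_mod (K := K) (L := L) y p hp0
  have hlin : (C dd * X + C cc).natDegree = 1 := natDegree_linear hdd
  have hdegp : p.natDegree = n := by
    rw [hpdef, natDegree_comp, hlin, mul_one, aux11_deg_eq (K := K) (L := L) x y dd cc hdd hxy]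
  have hq0 : (p /ₘ minpoly A y).natDegree = 0 := by
    rw [natDegree_divByMonic p hmony, hdegp]
    omega
  have hqC : p /ₘ minpoly A y = C ((p /ₘ minpoly A y).coeff 0) :=
    eq_C_of_natDegree_eq_zero hq0
  have hlc : (p /ₘ minpoly A y).coeff 0 = dd ^ n := by
    have h1 : p.leadingCoeff = dd ^ n := by
      rw [hpdef, leadingCoeff_comp (by rw [hlin]; exact one_ne_zero), minpoly.monic
        (Algebra.IsIntegral.isIntegral x) |>.leadingCoeff, one_mul, leadingCoeff_linear hdd,
        aux11_deg_eq (K := K) (L := L) x y dd cc hdd hxy]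
    have h2 : p.leadingCoeff = (minpoly A y).leadingCoeff * (p /ₘ minpoly A y).leadingCoeff := by
      conv_lhs => rw [hfac]
      rw [leadingCoeff_mul]
    rw [h1, hmony.leadingCoeff, one_mul] at h2
    rw [hqC, leadingCoeff_C] at h2
    exact h2.symm
  have hqval : p /ₘ minpoly A y = C (dd ^ n) := by rw [hqC, hlc]
  have hderiv : algebraMap A B dd * aux11_Hd A x
      = aux11_Hd A y * algebraMap A B (dd ^ n) := by
    have h3 : aeval y (derivative p) = algebraMap A B dd * aux11_Hd A x :=
      aux11_comp_deriv x y dd cc hxy (minpoly A x)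
    have h4 : aeval y (derivative p) = aux11_Hd A y * algebraMap A B (dd ^ n) := by
      conv_lhs => rw [hfac, hqval]
      rw [derivative_mul, derivative_C, mul_zero, add_zero, map_mul, aeval_C]
      rfl
    rw [← h3, h4]
  have hpow : algebraMap A B (dd ^ n)
      = algebraMap A B dd * algebraMap A B dd ^ (n - 1) := by
    rw [map_pow, ← pow_succ']
    congr 1
    omega
  rw [hpow] at hderiv
  apply mul_left_cancel₀ hddB
  rw [hderiv]
  ring

include K L in
theorem aux11_main {S : Type} [LinearOrder S] [Nonempty S]
    (b : S → B)
    (hchain : ∀ α β : S, α ≤ β → Algebra.adjoin A {b α} ≤ Algebra.adjoin A {b β})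
    (hunion : ∀ x : B, ∃ α : S, x ∈ Algebra.adjoin A {b α})
    (a : S → A) (ha : ∀ α, a α ≠ 0)
    (d c : S → S → A)
    (hd : ∀ α β : S, α ≤ β → a α = d α β * a β)
    (hb : ∀ α β : S, α ≤ β →
      b α = algebraMap A B (d α β) * b β + algebraMap A B (c α β)) :
    Nonempty ((KaehlerDifferential A B) ≃ₗ[B]
      (↥(Ideal.span (Set.range fun α : S => algebraMap A B (a α))) ⧸
        Submodule.comap
          (Ideal.span (Set.range fun α : S => algebraMap A B (a α))).subtype
          (Ideal.span (Set.range fun α : S => algebraMap A B (a α)) *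
            Ideal.span (Set.range (fun α : S => aux11_Hd A (b α)))))) := by
  classical
  set g : S → B := fun α => algebraMap A B (a α) with hgdef
  set U : Ideal B := Ideal.span (Set.range g) with hUdef
  set V : Ideal B := Ideal.span (Set.range fun α : S => aux11_Hd A (b α)) with hVdef
  set W : Submodule B ↥U := Submodule.comap U.subtype (U * V) with hWdef
  set DD := KaehlerDifferential.D A B with hDDdef
  have hAB : Function.Injective (algebraMap A B) := aux11_injAB (K := K) (L := L)
  have hgne : ∀ α, g α ≠ 0 := by
    intro α h
    exact ha α (hAB (show algebraMap A B (a α) = algebraMap A B 0 by simpa using h))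
  have hmemU : ∀ α, g α ∈ U := fun α => Ideal.subset_span ⟨α, rfl⟩
  have hVmem : ∀ α, aux11_Hd A (b α) ∈ V := fun α => Ideal.subset_span ⟨α, rfl⟩
  have hdne : ∀ α β : S, α ≤ β → d α β ≠ 0 := by
    intro α β hle h0
    exact ha α (by rw [hd α β hle, h0, zero_mul])
  have hdB : ∀ α β : S, α ≤ β → g α = algebraMap A B (d α β) * g β := by
    intro α β hle
    rw [hgdef]
    simp only []
    rw [hd α β hle, map_mul]
  -- the derivation relation between the D (b _)
  have hDb : ∀ α β : S, α ≤ β → DD (b α) = algebraMap A B (d α β) • DD (b β) := by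
    intro α β hle
    rw [hb α β hle, map_add, Derivation.map_algebraMap, add_zero, Derivation.leibniz,
      Derivation.map_algebraMap, smul_zero, add_zero]
  -- annihilation
  have hann : ∀ δ : S, aux11_Hd A (b δ) • DD (b δ) = 0 := by
    intro δ
    have h := (KaehlerDifferential.D A B).map_aeval (minpoly A (b δ)) (b δ)
    rw [minpoly.aeval, map_zero] at h
    exact (h.symm : _)
  have annV : ∀ γ δ : S, aux11_Hd A (b γ) • DD (b δ) = 0 := by
    intro γ δ
    rcases le_total γ δ with hle | hle
    · rw [aux11_Hd_rel (K := K) (L := L) (b γ) (b δ) (d γ δ) (c γ δ) (hdne γ δ hle) (hb γ δ hle),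
        mul_smul]
      rw [hann δ, smul_zero]
    · rw [hDb δ γ hle, smul_comm, hann γ, smul_zero]
  -- representation of elements of U
  have hrep : ∀ z ∈ U, ∃ (β : S) (t : B), z = t * g β := by
    intro z hz
    have hdir : Directed (· ≤ ·) (fun α : S => Submodule.span B {g α}) := by
      intro α β
      refine ⟨max α β, ?_, ?_⟩
      · show Submodule.span B {g α} ≤ Submodule.span B {g (max α β)}
        rw [Submodule.span_singleton_le_iff_mem, hdB α (max α β) (le_max_left _ _),
          ← smul_eq_mul]
        exact Submodule.smul_mem _ _ (Submodule.mem_span_singleton_self _)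
      · show Submodule.span B {g β} ≤ Submodule.span B {g (max α β)}
        rw [Submodule.span_singleton_le_iff_mem, hdB β (max α β) (le_max_right _ _),
          ← smul_eq_mul]
        exact Submodule.smul_mem _ _ (Submodule.mem_span_singleton_self _)
    rw [hUdef] at hz
    rw [Ideal.span, Submodule.span_range_eq_iSup] at hz
    obtain ⟨β, hβ⟩ := (Submodule.mem_iSup_of_directed _ hdir).mp hz
    obtain ⟨t, ht⟩ := Submodule.mem_span_singleton.mp hβ
    exact ⟨β, t, by rw [← ht, smul_eq_mul]⟩
  -- representation of elements of U * V
  have repUV : ∀ z ∈ U * V, ∃ (δ : S) (m : B), m ∈ V ∧ z = m * g δ := by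
    intro z hz
    refine Submodule.mul_induction_on hz ?_ ?_
    · intro u hu v hv
      obtain ⟨β, t, ht⟩ := hrep u hu
      exact ⟨β, t * v, Ideal.mul_mem_left _ _ hv, by rw [ht]; ring⟩
    · rintro z z' ⟨δ, m, hm, rfl⟩ ⟨δ', m', hm', rfl⟩
      refine ⟨max δ δ', m * algebraMap A B (d δ (max δ δ')) +
        m' * algebraMap A B (d δ' (max δ δ')), ?_, ?_⟩
      · exact Ideal.add_mem _ (Ideal.mul_mem_right _ _ hm) (Ideal.mul_mem_right _ _ hm')
      · rw [hdB δ (max δ δ') (le_max_left _ _), hdB δ' (max δ δ') (le_max_right _ _)]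
        ring
  -- polynomial representations
  have repx : ∀ (x : B) (α : S), x ∈ Algebra.adjoin A {b α} →
      ∃ f : A[X], aeval (b α) f = x := by
    intro x α hx
    rw [Algebra.adjoin_singleton_eq_range_aeval, AlgHom.mem_range] at hx
    exact hx
  have repCommon : ∀ x y : B, ∃ (γ : S) (f f' : A[X]),
      aeval (b γ) f = x ∧ aeval (b γ) f' = y := by
    intro x y
    obtain ⟨α, hx⟩ := hunion x
    obtain ⟨β, hy⟩ := hunion y
    obtain ⟨f, hf⟩ := repx x (max α β) (hchain α (max α β) (le_max_left _ _) hx)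
    obtain ⟨f', hf'⟩ := repx y (max α β) (hchain β (max α β) (le_max_right _ _) hy)
    exact ⟨max α β, f, f', hf, hf'⟩
  -- the element `f'(b_α)·a_α` of `U`
  set elem : S → A[X] → ↥U :=
    (fun α f => ⟨aeval (b α) (derivative f) * g α,
      Ideal.mul_mem_left _ _ (hmemU α)⟩ : S → A[X] → ↥U) with helemdef
  have helemval : ∀ (α : S) (f : A[X]),
      (elem α f : B) = aeval (b α) (derivative f) * g α := fun _ _ => rfl
  -- the derivation into U / UV
  set Dfun : B → (↥U ⧸ W) := (fun x =>
    Submodule.Quotient.mk (elem (hunion x).choose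
      (repx x (hunion x).choose (hunion x).choose_spec).choose)) with hDfundef
  have wd2 : ∀ (α β : S) (f f' : A[X]), α ≤ β → aeval (b α) f = aeval (b β) f' →
      (Submodule.Quotient.mk (elem α f) : ↥U ⧸ W) = Submodule.Quotient.mk (elem β f') := by
    intro α β f f' hle heq
    have step1 : elem α f = elem β (f.comp (C (d α β) * X + C (c α β))) := by
      apply Subtype.ext
      rw [helemval, helemval,
        aux11_comp_deriv (b α) (b β) (d α β) (c α β) (hb α β hle) f,
        hdB α β hle]
      ring
    rw [step1]
    rw [Submodule.Quotient.eq]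
    have hcomp : aeval (b β) (f.comp (C (d α β) * X + C (c α β)) - f') = 0 := by
      rw [map_sub, aux11_comp_eval (b α) (b β) (d α β) (c α β) (hb α β hle) f, heq, sub_self]
    have hval : ((elem β (f.comp (C (d α β) * X + C (c α β))) - elem β f' : ↥U) : B)
        = aeval (b β) (derivative (f.comp (C (d α β) * X + C (c α β)) - f')) * g β := by
      rw [AddSubgroupClass.coe_sub, helemval, helemval, map_sub, map_sub]
      ring
    have : ((elem β (f.comp (C (d α β) * X + C (c α β))) - elem β f' : ↥U) : B) ∈ U * V := by
      rw [hval, aux11_deriv_factor (K := K) (L := L) (b β) _ hcomp]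
      have : aux11_Hd A (b β) *
          aeval (b β) ((f.comp (C (d α β) * X + C (c α β)) - f') /ₘ minpoly A (b β)) * g β
          = (aeval (b β) ((f.comp (C (d α β) * X + C (c α β)) - f') /ₘ minpoly A (b β)) * g β)
            * aux11_Hd A (b β) := by ring
      rw [this]
      exact Ideal.mul_mem_mul (Ideal.mul_mem_left _ _ (hmemU β)) (hVmem β)
    exact this
  have wd : ∀ (x : B) (α : S) (f : A[X]), aeval (b α) f = x →
      Dfun x = Submodule.Quotient.mk (elem α f) := by
    intro x α f hf
    rw [hDfundef]
    simp only []
    have hf0 := (repx x (hunion x).choose (hunion x).choose_spec).choose_spec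
    rcases le_total (hunion x).choose α with hle | hle
    · exact wd2 _ _ _ _ hle (by rw [hf0, hf])
    · exact (wd2 _ _ _ _ hle (by rw [hf0, hf])).symm
  -- additivity of Dfun
  have hDadd : ∀ x y : B, Dfun (x + y) = Dfun x + Dfun y := by
    intro x y
    obtain ⟨γ, f, f', hf, hf'⟩ := repCommon x y
    rw [wd x γ f hf, wd y γ f' hf', wd (x + y) γ (f + f') (by rw [map_add, hf, hf']),
      ← Submodule.Quotient.mk_add]
    congr 1
    apply Subtype.ext
    rw [Submodule.coe_add, helemval, helemval, helemval, map_add, map_add]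
    ring
  have hDsmulA : ∀ (r : A) (x : B), Dfun (r • x) = r • Dfun x := by
    intro r x
    obtain ⟨α, hx⟩ := hunion x
    obtain ⟨f, hf⟩ := repx x α hx
    rw [wd x α f hf,
      wd (r • x) α (C r * f) (by rw [map_mul, aeval_C, hf, Algebra.smul_def]),
      ← Submodule.Quotient.mk_smul]
    congr 1
    apply Subtype.ext
    rw [Submodule.coe_smul_of_tower, helemval, helemval, derivative_C_mul, map_mul, aeval_C,
      Algebra.smul_def]
    ring
  have hDone : Dfun 1 = 0 := by
    have := wd 1 (Classical.arbitrary S) 1 (map_one _)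
    rw [this]
    have : elem (Classical.arbitrary S) 1 = 0 := by
      apply Subtype.ext
      rw [helemval, derivative_one, map_zero, zero_mul]
      rfl
    rw [this, Submodule.Quotient.mk_zero]
  have hDleib : ∀ x y : B, Dfun (x * y) = x • Dfun y + y • Dfun x := by
    intro x y
    obtain ⟨γ, f, f', hf, hf'⟩ := repCommon x y
    rw [wd x γ f hf, wd y γ f' hf', wd (x * y) γ (f * f') (by rw [map_mul, hf, hf']),
      ← Submodule.Quotient.mk_smul, ← Submodule.Quotient.mk_smul,
      ← Submodule.Quotient.mk_add]
    congr 1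
    apply Subtype.ext
    rw [Submodule.coe_add, SetLike.val_smul, SetLike.val_smul, smul_eq_mul,
      smul_eq_mul, helemval, helemval, helemval, derivative_mul, map_add, map_mul,
      map_mul, hf, hf']
    ring
  set Dlin : B →ₗ[A] (↥U ⧸ W) :=
    { toFun := Dfun
      map_add' := hDadd
      map_smul' := fun r x => hDsmulA r x } with hDlindef
  set Dder : Derivation A B (↥U ⧸ W) :=
    { toLinearMap := Dlin
      map_one_eq_zero' := hDone
      leibniz' := fun x y => hDleib x y } with hDderdef
  set φ : (KaehlerDifferential A B) →ₗ[B] (↥U ⧸ W) := Dder.liftKaehlerDifferential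
    with hφdef
  have hφD : ∀ x : B, φ (DD x) = Dfun x := fun x =>
    Dder.liftKaehlerDifferential_comp_D x
  -- construction of the inverse
  have hrepU : ∀ u : ↥U, ∃ (β : S) (t : B), (u : B) = t * g β := fun u => hrep u u.2
  set ψfun : ↥U → (KaehlerDifferential A B) := fun u =>
    (hrepU u).choose_spec.choose • DD (b (hrepU u).choose) with hψdef
  have claim : ∀ (β γ : S) (t s : B), β ≤ γ → t * g β = s * g γ →
      t • DD (b β) = s • DD (b γ) := by
    intro β γ t s hle heq
    have h1 : (t * algebraMap A B (d β γ) - s) * g γ = 0 := by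
      rw [sub_mul, mul_assoc, ← hdB β γ hle, heq, sub_self]
    have h2 : t * algebraMap A B (d β γ) = s := by
      rcases mul_eq_zero.mp h1 with h | h
      · exact sub_eq_zero.mp h
      · exact absurd h (hgne γ)
    rw [hDb β γ hle, smul_smul, h2]
  have wdψ : ∀ (u : ↥U) (β : S) (t : B), (u : B) = t * g β →
      ψfun u = t • DD (b β) := by
    intro u β t ht
    rw [hψdef]
    simp only []
    have h0 : (u : B) = (hrepU u).choose_spec.choose * g (hrepU u).choose :=
      (hrepU u).choose_spec.choose_spec
    rcases le_total (hrepU u).choose β with hle | hle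
    · exact claim _ _ _ _ hle (by rw [← h0, ht])
    · exact (claim _ _ _ _ hle (by rw [← ht]; exact h0)).symm
  have ψadd : ∀ u u' : ↥U, ψfun (u + u') = ψfun u + ψfun u' := by
    intro u u'
    obtain ⟨β, t, ht⟩ := hrepU u
    obtain ⟨γ, s, hs⟩ := hrepU u'
    have h1 : (u : B) = (t * algebraMap A B (d β (max β γ))) * g (max β γ) := by
      rw [ht, hdB β (max β γ) (le_max_left _ _)]; ring
    have h2 : (u' : B) = (s * algebraMap A B (d γ (max β γ))) * g (max β γ) := by
      rw [hs, hdB γ (max β γ) (le_max_right _ _)]; ring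
    have h3 : ((u + u' : ↥U) : B) = (t * algebraMap A B (d β (max β γ))
        + s * algebraMap A B (d γ (max β γ))) * g (max β γ) := by
      rw [Submodule.coe_add, h1, h2]; ring
    rw [wdψ u _ _ h1, wdψ u' _ _ h2, wdψ (u + u') _ _ h3, add_smul]
  have ψsmul : ∀ (r : B) (u : ↥U), ψfun (r • u) = r • ψfun u := by
    intro r u
    obtain ⟨β, t, ht⟩ := hrepU u
    have h1 : ((r • u : ↥U) : B) = (r * t) * g β := by
      rw [SetLike.val_smul, smul_eq_mul, ht]; ring
    rw [wdψ _ _ _ h1, wdψ u _ _ ht, mul_smul]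
  set ψlin : ↥U →ₗ[B] (KaehlerDifferential A B) :=
    { toFun := ψfun
      map_add' := ψadd
      map_smul' := fun r u => ψsmul r u } with hψlindef
  have hker : W ≤ LinearMap.ker ψlin := by
    intro u hu
    rw [LinearMap.mem_ker]
    have huv : (u : B) ∈ U * V := hu
    obtain ⟨δ, m, hm, hz⟩ := repUV _ huv
    show ψfun u = 0
    rw [wdψ u δ m hz]
    rw [hVdef] at hm
    rw [Ideal.span] at hm
    refine Submodule.span_induction ?_ ?_ ?_ ?_ hm
    · rintro _ ⟨γ, rfl⟩
      exact annV γ δ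
    · rw [zero_smul]
    · intro x y _ _ hx hy
      rw [add_smul, hx, hy, add_zero]
    · intro r x _ hx
      rw [smul_eq_mul, mul_smul, hx, smul_zero]
  set ψ : (↥U ⧸ W) →ₗ[B] (KaehlerDifferential A B) := Submodule.liftQ W ψlin hker
    with hψQdef
  refine ⟨LinearEquiv.ofLinear φ ψ ?_ ?_⟩
  · -- φ ∘ ψ = id
    apply Submodule.linearMap_qext
    apply LinearMap.ext
    intro u
    have hq : ∀ u' : ↥U, W.mkQ u' = Submodule.Quotient.mk u' := fun _ => rfl
    rw [LinearMap.comp_apply, LinearMap.comp_apply, hq, Submodule.liftQ_apply]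
    obtain ⟨β, t, ht⟩ := hrepU u
    have h1 : ψlin u = t • DD (b β) := wdψ u β t ht
    rw [h1, map_smul, hφD, wd (b β) β X (by rw [aeval_X]), ← Submodule.Quotient.mk_smul]
    have h2 : t • elem β X = u := by
      apply Subtype.ext
      rw [SetLike.val_smul, smul_eq_mul, helemval, derivative_X, map_one, one_mul, ht]
    rw [h2]
    rfl
  · -- ψ ∘ φ = id
    apply Derivation.liftKaehlerDifferential_unique
    apply Derivation.ext
    intro x
    have hcd : ∀ (f : (KaehlerDifferential A B) →ₗ[B] (KaehlerDifferential A B)),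
        (f.compDer (KaehlerDifferential.D A B)) x = f (DD x) := fun _ => rfl
    rw [hcd, hcd]
    obtain ⟨α, hx⟩ := hunion x
    obtain ⟨f, hf⟩ := repx x α hx
    rw [LinearMap.comp_apply, hφD, wd x α f hf, LinearMap.id_apply]
    have h1 : ψ (Submodule.Quotient.mk (elem α f)) = ψlin (elem α f) :=
      Submodule.liftQ_apply _ _ _
    rw [h1, show ψlin (elem α f) = ψfun (elem α f) from rfl,
      wdψ (elem α f) α (aeval (b α) (derivative f)) (helemval α f)]
    rw [hDDdef, ← Derivation.map_aeval, hf]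

end aux

/-- **Proposition (direct limit presentation of Kähler differentials).** Let `A` be an
integrally closed domain with quotient field `K`, `L|K` an algebraic field extension,
and `B` a domain with quotient field `L` such that `A ⊆ B` is integral.  Suppose the
`b_α` (indexed by a nonempty totally ordered set `S`) satisfy
`A[b_α] ⊆ A[b_β]` for `α ≤ β` and `⋃ A[b_α] = B`, and there are nonzero `a_α ∈ A`
such that for `α ≤ β` there are `d_{α,β}, c_{α,β} ∈ A` with `a_α = d_{α,β}·a_β` and
`b_α = d_{α,β}·b_β + c_{α,β}`.  With `h_α` the minimal polynomial of `b_α` over `K`,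
`U = (a_α | α)` and `V = (h_α'(b_α) | α)` as ideals of `B`, one has a `B`-module
isomorphism `Ω_{B|A} ≅ U/UV`. -/
theorem stmt11 {A B K L : Type} [CommRing A] [IsDomain A] [CommRing B] [IsDomain B]
    [Field K] [Field L]
    [Algebra A K] [IsFractionRing A K]
    [Algebra B L] [IsFractionRing B L]
    [Algebra A B] [Algebra K L] [Algebra A L]
    [IsScalarTower A K L] [IsScalarTower A B L]
    [IsIntegrallyClosed A]
    [Algebra.IsAlgebraic K L] [Algebra.IsIntegral A B]
    {S : Type} [LinearOrder S] [Nonempty S]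
    (b : S → B)
    (hchain : ∀ α β : S, α ≤ β → Algebra.adjoin A {b α} ≤ Algebra.adjoin A {b β})
    (hunion : ∀ x : B, ∃ α : S, x ∈ Algebra.adjoin A {b α})
    (a : S → A) (ha : ∀ α, a α ≠ 0)
    (d c : S → S → A)
    (hd : ∀ α β : S, α ≤ β → a α = d α β * a β)
    (hb : ∀ α β : S, α ≤ β →
      b α = algebraMap A B (d α β) * b β + algebraMap A B (c α β)) :
    Nonempty ((KaehlerDifferential A B) ≃ₗ[B]
      (↥(Ideal.span (Set.range fun α : S => algebraMap A B (a α))) ⧸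
        Submodule.comap
          (Ideal.span (Set.range fun α : S => algebraMap A B (a α))).subtype
          (Ideal.span (Set.range fun α : S => algebraMap A B (a α)) *
            Ideal.span {x : B | ∃ α : S,
              algebraMap B L x =
                Polynomial.aeval (algebraMap B L (b α))
                  (Polynomial.derivative (minpoly K (algebraMap B L (b α))))}))) := by
  rw [aux11_Vset (A := A) (K := K) (L := L) b]
  exact aux11_main (K := K) (L := L) b hchain hunion a ha d c hd hb
end
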